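/- As α → ∞, φ''(1) = 2α² + 12α²e^{-α} + O(α²e^{-2α}), where φ is the Morse potential with r₀ = 1 + (1/α)·log((1+2e^{-α})/(1+2e^{-2α})). More precisely, there exist constants C, α₀ > 0 such that |φ''(1) - 2α² - 12α²e^{-α}| ≤ Cα²e^{-2α} for all α ≥ α₀. -/

import Mathlib

/-- Equilibrium distance parameter of the Morse potential. -/
noncomputable def morseR0 (α : ℝ) : ℝ :=
  1 + (1 / α) * Real.log ((1 + 2 * Real.exp (-α)) / (1 + 2 * Real.exp (-2 * α)))

/-- The (shifted) Morse potential with stiffness α and shift φ₀. -/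
noncomputable def morse (α φ₀ : ℝ) (r : ℝ) : ℝ :=
  Real.exp (-2 * α * (r - morseR0 α)) - 2 * Real.exp (-α * (r - morseR0 α)) - φ₀

/-- φ''(1) = 2α² + 12α²e^{-α} + O(α²e^{-2α}) as α → ∞. -/
theorem stmt_2 (φ₀ : ℝ) :
    ∃ C α₀ : ℝ, 0 < C ∧ 0 < α₀ ∧ ∀ α : ℝ, α₀ ≤ α →
      |deriv (deriv (morse α φ₀)) 1 - 2 * α ^ 2 - 12 * α ^ 2 * Real.exp (-α)|
        ≤ C * α ^ 2 * Real.exp (-2 * α) := by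
  refine ⟨116, 1, by norm_num, by norm_num, ?_⟩
  intro α hα
  have hα0 : (0:ℝ) < α := lt_of_lt_of_le one_pos hα
  set x := Real.exp (-α) with hxdef
  have hx0 : 0 < x := Real.exp_pos _
  have hx1 : x ≤ 1 := Real.exp_le_one_iff.mpr (by linarith)
  have hx2 : Real.exp (-2*α) = x^2 := by
    rw [hxdef, sq, ← Real.exp_add]; ring_nf
  set r₀ := morseR0 α with hr0
  set Q : ℝ := (1 + 2*x) / (1 + 2*x^2) with hQ
  have hden : (0:ℝ) < 1 + 2*x^2 := by positivity
  have hQpos : 0 < Q := by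
    apply div_pos _ hden; linarith
  have hE1 : Real.exp (-α * (1 - r₀)) = Q := by
    have h : -α * (1 - r₀) = Real.log Q := by
      rw [hr0, morseR0, hQ, ← hx2, ← hxdef]
      field_simp
      ring
    rw [h, Real.exp_log hQpos]
  have hE2 : Real.exp (-2*α * (1 - r₀)) = Q^2 := by
    have : (-2*α) * (1 - r₀) = (-α*(1-r₀)) + (-α*(1-r₀)) := by ring
    rw [this, Real.exp_add, hE1, sq]
  -- derivatives
  have hd1 : ∀ r : ℝ, HasDerivAt (morse α φ₀)
      (Real.exp (-2*α*(r - r₀)) * (-2*α) - 2*(Real.exp (-α*(r - r₀)) * (-α))) r := by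
    intro r
    have h1 : HasDerivAt (fun r : ℝ => -2*α*(r - r₀)) (-2*α) r := by
      simpa using ((hasDerivAt_id r).sub_const r₀).const_mul (-2*α)
    have h2 : HasDerivAt (fun r : ℝ => -α*(r - r₀)) (-α) r := by
      simpa using ((hasDerivAt_id r).sub_const r₀).const_mul (-α)
    have hfun : morse α φ₀ = fun r => Real.exp (-2*α*(r - r₀)) - 2*Real.exp (-α*(r - r₀)) - φ₀ := rfl
    have := (h1.exp.sub (h2.exp.const_mul 2)).sub_const φ₀
    rw [hfun]
    exact this
  have hderiv1 : deriv (morse α φ₀) = fun r =>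
      Real.exp (-2*α*(r - r₀)) * (-2*α) - 2*(Real.exp (-α*(r - r₀)) * (-α)) :=
    funext fun r => (hd1 r).deriv
  have hd2 : HasDerivAt (deriv (morse α φ₀))
      ((Real.exp (-2*α*(1 - r₀)) * (-2*α)) * (-2*α)
        - 2*((Real.exp (-α*(1 - r₀)) * (-α)) * (-α))) 1 := by
    rw [hderiv1]
    have h1 : HasDerivAt (fun r : ℝ => -2*α*(r - r₀)) (-2*α) (1:ℝ) := by
      simpa using ((hasDerivAt_id (1:ℝ)).sub_const r₀).const_mul (-2*α)
    have h2 : HasDerivAt (fun r : ℝ => -α*(r - r₀)) (-α) (1:ℝ) := by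
      simpa using ((hasDerivAt_id (1:ℝ)).sub_const r₀).const_mul (-α)
    exact (h1.exp.mul_const (-2*α)).sub ((h2.exp.mul_const (-α)).const_mul 2)
  have hval : deriv (deriv (morse α φ₀)) 1 = 4*α^2*Q^2 - 2*α^2*Q := by
    rw [hd2.deriv, hE1, hE2]; ring
  rw [hval, hx2]
  -- key algebraic identity
  have hkey : (4*α^2*Q^2 - 2*α^2*Q - 2*α^2 - 12*α^2*x) * (1+2*x^2)^2
      = 2*α^2*x^2*(2-28*x-4*x^2-24*x^3) := by
    rw [hQ]
    field_simp
    ring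
  set D : ℝ := 4*α^2*Q^2 - 2*α^2*Q - 2*α^2 - 12*α^2*x with hD
  have h1le : (1:ℝ) ≤ (1+2*x^2)^2 := by nlinarith
  have habs : |2-28*x-4*x^2-24*x^3| ≤ 58 := by
    rw [abs_le]
    constructor <;> nlinarith [hx0.le, hx1, sq_nonneg x, pow_le_one₀ hx0.le hx1 (n := 3)]
  have step1 : |D| ≤ |D| * (1+2*x^2)^2 := le_mul_of_one_le_right (abs_nonneg _) h1le
  have step2 : |D| * (1+2*x^2)^2 = (2*α^2*x^2) * |2-28*x-4*x^2-24*x^3| := by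
    rw [← abs_of_pos (show (0:ℝ) < (1+2*x^2)^2 by positivity), ← abs_mul, hkey, abs_mul,
      abs_of_pos (show (0:ℝ) < 2*α^2*x^2 by positivity)]
  have step3 : (2*α^2*x^2) * |2-28*x-4*x^2-24*x^3| ≤ 116 * α^2 * x^2 := by
    have := mul_le_mul_of_nonneg_left habs (show (0:ℝ) ≤ 2*α^2*x^2 by positivity)
    linarith
  calc |D| ≤ |D| * (1+2*x^2)^2 := step1
    _ = (2*α^2*x^2) * |2-28*x-4*x^2-24*x^3| := step2
    _ ≤ 116 * α^2 * x^2 := step3
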